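/- arXiv:math/0201246 — 6 statements merged into one kernel-verified Lean document; each statement's English description precedes it below -/
import Mathlib

section
/- Let p be a prime with p ≠ 5 and let k be a field of characteristic p. In R = k[x_0,x_1,x_2,x_3] take f = x_0^5 + x_1^5 + x_2^5 + x_3^5 and let 𝔇 be the associated relations submodule. Then there exists c ∈ k with c ≠ 0 such that x_0^{3p}·x_1^{4p}·x_2^{4p}·x_3^{4p} ≡ c · x_0^{3p mod 5}·x_1^{4p mod 5}·x_2^{4p mod 5}·x_3^{4p mod 5} (mod 𝔇). (This is the pole-order reduction of the Frobenius image of the basis vector of H^2(X,O_X) in the proof of Theorem 8.1: for p ≡ 1, 2, 3, 4 (mod 5) the target monomial has degree 15, 10, 10, 5 respectively, i.e. pole order 3, 2, 2, 1, which yields a(X) = 0, 1, 1, 2 for the Fermat quintic surface X ⊂ P^3.) -/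
open MvPolynomial

/-- The operator `D_i(g) = x_i·(∂g/∂x_i) + x_i·(∂f/∂x_i)·g` associated to `f`. -/
noncomputable def Dop {k : Type*} [Field k] {N : ℕ} (f : MvPolynomial (Fin N) k)
    (i : Fin N) (g : MvPolynomial (Fin N) k) : MvPolynomial (Fin N) k :=
  X i * pderiv i g + X i * pderiv i f * g

/-- The relations submodule `𝔇` associated to `f`: the `k`-linear span of
all the `D_i(g)` for `g` a polynomial and `i` an index. -/
noncomputable def relMod {k : Type*} [Field k] {N : ℕ} (f : MvPolynomial (Fin N) k) :
    Submodule k (MvPolynomial (Fin N) k) :=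
  Submodule.span k {h | ∃ i g, h = Dop f i g}

section Aux

variable {k : Type*} [Field k]

local notation "F" => (X 0 ^ 5 + X 1 ^ 5 + X 2 ^ 5 + X 3 ^ 5 : MvPolynomial (Fin 4) k)

lemma pderivF (i : Fin 4) : pderiv i F = C (5:k) * X i ^ 4 := by
  have h : (C (5:k)) = ((5:ℕ) : MvPolynomial (Fin 4) k) := by
    rw [show (5:k) = ((5:ℕ):k) by norm_num, map_natCast]
  fin_cases i <;> simp +decide [pderiv_pow, Pi.single_apply, h]

lemma basic (h5 : (5:k) ≠ 0) (i : Fin 4) (a : ℕ) (r : MvPolynomial (Fin 4) k)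
    (hr : pderiv i r = 0) :
    X i ^ (a + 5) * r - C (-(a:k)/5) * (X i ^ a * r) ∈ relMod F := by
  have hD : Dop F i (X i ^ a * r) ∈ relMod F :=
    Submodule.subset_span ⟨i, X i ^ a * r, rfl⟩
  have hX : X i * pderiv i (X i ^ a : MvPolynomial (Fin 4) k) = C (a:k) * X i ^ a := by
    cases a with
    | zero => simp
    | succ n =>
      rw [pderiv_pow, pderiv_X_self, mul_one, Nat.add_sub_cancel, map_natCast]
      ring
  have key : Dop F i (X i ^ a * r) =
      (a:k) • (X i ^ a * r) + (5:k) • (X i ^ (a + 5) * r) := by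
    unfold Dop
    rw [pderivF, pderiv_mul, hr, mul_zero, add_zero, ← mul_assoc, hX,
      smul_eq_C_mul, smul_eq_C_mul]
    ring
  have e : X i ^ (a + 5) * r - C (-(a:k)/5) * (X i ^ a * r)
      = (1/5 : k) • Dop F i (X i ^ a * r) := by
    rw [key, ← smul_eq_C_mul]
    match_scalars <;> field_simp
  rw [e]
  exact Submodule.smul_mem _ _ hD

lemma reduce (h5 : (5:k) ≠ 0) (i : Fin 4) (r : MvPolynomial (Fin 4) k)
    (hr : pderiv i r = 0) (a t : ℕ)
    (h : ∀ j < t, ((a + 5*j : ℕ) : k) ≠ 0) :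
    ∃ c : k, c ≠ 0 ∧ X i ^ (a + 5*t) * r - C c * (X i ^ a * r) ∈ relMod F := by
  induction t with
  | zero => exact ⟨1, one_ne_zero, by simp⟩
  | succ t ih =>
    obtain ⟨c, hc, hm⟩ := ih (fun j hj => h j (Nat.lt_succ_of_lt hj))
    set e : k := -((a + 5*t : ℕ) : k)/5 with he
    have hene : e ≠ 0 := by
      rw [he, div_ne_zero_iff]
      exact ⟨neg_ne_zero.mpr (h t (Nat.lt_succ_self t)), h5⟩
    refine ⟨e * c, mul_ne_zero hene hc, ?_⟩
    have hb := basic h5 i (a + 5*t) r hr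
    have hid : X i ^ (a + 5*(t+1)) * r - C (e * c) * (X i ^ a * r)
        = (X i ^ ((a + 5*t) + 5) * r - C e * (X i ^ (a + 5*t) * r))
          + e • (X i ^ (a + 5*t) * r - C c * (X i ^ a * r)) := by
      have : a + 5*(t+1) = (a + 5*t) + 5 := by ring
      rw [this, smul_eq_C_mul, map_mul]
      ring
    rw [hid]
    exact Submodule.add_mem _ hb (Submodule.smul_mem _ _ hm)

end Aux

lemma nzlem (p : ℕ) (hp : p.Prime) (hp5 : p ≠ 5)
    (k : Type*) [Field k] [CharP k p] (m : ℕ) (hm : m < 5) :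
    ∀ j < m*p/5, ((m*p % 5 + 5*j : ℕ) : k) ≠ 0 := by
  intro j hj h
  rw [CharP.cast_eq_zero_iff k p] at h
  have hpos : 0 < p := hp.pos
  have hmod := Nat.mod_add_div (m*p) 5
  have ht : m*p/5 < p := by
    rw [Nat.div_lt_iff_lt_mul (by norm_num)]
    nlinarith
  have hdvd : p ∣ 5*(m*p/5 - j) := by
    have heq : 5*(m*p/5 - j) = m*p - (m*p % 5 + 5*j) := by omega
    rw [heq]
    exact Nat.dvd_sub (dvd_mul_left p m) h
  have hcop : Nat.Coprime p 5 := (Nat.coprime_primes hp (by norm_num)).mpr hp5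
  have := Nat.le_of_dvd (by omega) (hcop.dvd_of_dvd_mul_left hdvd)
  omega

/-- For the Fermat quintic surface `x_0^5+x_1^5+x_2^5+x_3^5 = 0` in characteristic
`p ≠ 5`, the Frobenius image monomial `x_0^{3p} x_1^{4p} x_2^{4p} x_3^{4p}` is
congruent mod `𝔇` to a nonzero multiple of
`x_0^{3p mod 5} x_1^{4p mod 5} x_2^{4p mod 5} x_3^{4p mod 5}`. -/
theorem stmt0 (p : ℕ) (hp : p.Prime) (hp5 : p ≠ 5)
    (k : Type*) [Field k] [CharP k p] :
    ∃ c : k, c ≠ 0 ∧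
      (X 0 ^ (3 * p) * X 1 ^ (4 * p) * X 2 ^ (4 * p) * X 3 ^ (4 * p)
        - C c * (X 0 ^ (3 * p % 5) * X 1 ^ (4 * p % 5) * X 2 ^ (4 * p % 5)
            * X 3 ^ (4 * p % 5)))
        ∈ relMod (X 0 ^ 5 + X 1 ^ 5 + X 2 ^ 5 + X 3 ^ 5 : MvPolynomial (Fin 4) k) := by
  have h5' : ((5:ℕ):k) ≠ 0 := by
    rw [Ne, CharP.cast_eq_zero_iff k p]
    exact fun hd => hp5 ((Nat.prime_dvd_prime_iff_eq hp (by norm_num)).mp hd)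
  have h5 : (5:k) ≠ 0 := by exact_mod_cast h5'
  have e0 : (3*p % 5) + 5 * (3*p/5) = 3*p := Nat.mod_add_div _ _
  have e1 : (4*p % 5) + 5 * (4*p/5) = 4*p := Nat.mod_add_div _ _
  -- reduce variable 0
  obtain ⟨c0, hc0, h0⟩ := reduce h5 0 (X 1 ^ (4*p) * X 2 ^ (4*p) * X 3 ^ (4*p)) (by simp [pderiv_mul, pderiv_pow]) (3*p % 5) (3*p/5) (nzlem p hp hp5 k 3 (by norm_num))
  obtain ⟨c1, hc1, h1⟩ := reduce h5 1 (X 0 ^ (3*p % 5) * X 2 ^ (4*p) * X 3 ^ (4*p)) (by simp [pderiv_mul, pderiv_pow]) (4*p % 5) (4*p/5) (nzlem p hp hp5 k 4 (by norm_num))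
  obtain ⟨c2, hc2, h2⟩ := reduce h5 2 (X 0 ^ (3*p % 5) * X 1 ^ (4*p % 5) * X 3 ^ (4*p)) (by simp [pderiv_mul, pderiv_pow]) (4*p % 5) (4*p/5) (nzlem p hp hp5 k 4 (by norm_num))
  obtain ⟨c3, hc3, h3⟩ := reduce h5 3 (X 0 ^ (3*p % 5) * X 1 ^ (4*p % 5) * X 2 ^ (4*p % 5)) (by simp [pderiv_mul, pderiv_pow]) (4*p % 5) (4*p/5) (nzlem p hp hp5 k 4 (by norm_num))
  rw [e0] at h0
  rw [e1] at h1 h2 h3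
  refine ⟨c0 * c1 * c2 * c3, mul_ne_zero (mul_ne_zero (mul_ne_zero hc0 hc1) hc2) hc3, ?_⟩
  have hid : (X 0 ^ (3*p) : MvPolynomial (Fin 4) k) * X 1 ^ (4*p) * X 2 ^ (4*p) * X 3 ^ (4*p)
        - C (c0 * c1 * c2 * c3) * (X 0 ^ (3*p % 5) * X 1 ^ (4*p % 5) * X 2 ^ (4*p % 5) * X 3 ^ (4*p % 5))
      = (X 0 ^ (3*p) * (X 1 ^ (4*p) * X 2 ^ (4*p) * X 3 ^ (4*p))
          - C c0 * (X 0 ^ (3*p % 5) * (X 1 ^ (4*p) * X 2 ^ (4*p) * X 3 ^ (4*p))))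
        + c0 • ((X 1 ^ (4*p) * (X 0 ^ (3*p % 5) * X 2 ^ (4*p) * X 3 ^ (4*p))
          - C c1 * (X 1 ^ (4*p % 5) * (X 0 ^ (3*p % 5) * X 2 ^ (4*p) * X 3 ^ (4*p))))
        + c1 • ((X 2 ^ (4*p) * (X 0 ^ (3*p % 5) * X 1 ^ (4*p % 5) * X 3 ^ (4*p))
          - C c2 * (X 2 ^ (4*p % 5) * (X 0 ^ (3*p % 5) * X 1 ^ (4*p % 5) * X 3 ^ (4*p))))
        + c2 • (X 3 ^ (4*p) * (X 0 ^ (3*p % 5) * X 1 ^ (4*p % 5) * X 2 ^ (4*p % 5))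
          - C c3 * (X 3 ^ (4*p % 5) * (X 0 ^ (3*p % 5) * X 1 ^ (4*p % 5) * X 2 ^ (4*p % 5)))))) := by
    simp only [smul_eq_C_mul, map_mul]
    ring
  rw [hid]
  exact Submodule.add_mem _ h0 (Submodule.smul_mem _ _ (Submodule.add_mem _ h1
    (Submodule.smul_mem _ _ (Submodule.add_mem _ h2 (Submodule.smul_mem _ _ h3)))))
end

section
/- Let p be a prime and k a field of characteristic p. In R = k[x_0, …, x_p] (p+1 variables) take f = x_0^{p+1} + ⋯ + x_p^{p+1} and let 𝔇 be the associated relations submodule. Then there exists c ∈ k with c ≠ 0 such that (x_0⋯x_p)^{p²} ≡ c · (x_0⋯x_p) (mod 𝔇). (This is the pole-order reduction proving Corollary 8.3: the (p−1)-dimensional Fermat variety x_0^{p+1} + ⋯ + x_p^{p+1} = 0 in P^p is a Calabi–Yau variety whose a-number equals its dimension p−1.) -/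
open MvPolynomial Nat

lemma Dop_mem_relMod {k : Type*} [Field k] {N : ℕ} (f : MvPolynomial (Fin N) k)
    (i : Fin N) (g : MvPolynomial (Fin N) k) : Dop f i g ∈ relMod f :=
  Submodule.subset_span ⟨i, g, rfl⟩

lemma pderiv_X_pow_ne {k : Type*} [Field k] {N : ℕ} {i j : Fin N} (hij : j ≠ i) (n : ℕ) :
    pderiv i ((X j : MvPolynomial (Fin N) k) ^ n) = 0 := by
  rw [pderiv_pow, pderiv_X_of_ne hij, mul_zero]

lemma X_mul_pderiv_X_pow {k : Type*} [Field k] {N : ℕ} (i : Fin N) (a : ℕ) :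
    (X i : MvPolynomial (Fin N) k) * pderiv i (X i ^ a) = C (a : k) * X i ^ a := by
  induction a with
  | zero => simp
  | succ n ih =>
    rw [pow_succ, pderiv_mul, pderiv_X_self, mul_one, mul_add, ← mul_assoc, ih,
      show ((n + 1 : ℕ) : k) = (n : k) + 1 by push_cast; ring, map_add, map_one]
    ring

lemma pderiv_prod_pow {k : Type*} [Field k] {N : ℕ} (j : Fin N) (t : Finset (Fin N))
    (hj : j ∉ t) (e : Fin N → ℕ) :
    pderiv j (∏ i ∈ t, (X i : MvPolynomial (Fin N) k) ^ e i) = 0 := by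
  classical
  induction t using Finset.induction with
  | empty => simp
  | @insert a s hnot ih =>
    have haj : a ≠ j := fun h => hj (h ▸ Finset.mem_insert_self a s)
    rw [Finset.prod_insert hnot, pderiv_mul,
      pderiv_X_pow_ne haj (e a),
      ih (fun h => hj (Finset.mem_insert_of_mem h)), zero_mul, mul_zero, add_zero]

section Main

variable (p : ℕ) (hp : p.Prime) (k : Type*) [Field k] [CharP k p]

local notation "f" => (∑ i : Fin (p + 1), X i ^ (p + 1) : MvPolynomial (Fin (p + 1)) k)

include hp

omit hp in
lemma X_mul_pderiv_f (i : Fin (p + 1)) :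
    (X i : MvPolynomial (Fin (p + 1)) k) * pderiv i f = X i ^ (p + 1) := by
  classical
  rw [map_sum, Finset.mul_sum, Finset.sum_eq_single i
    (fun j _ hji => by rw [pderiv_X_pow_ne hji, mul_zero]) (by simp)]
  rw [X_mul_pderiv_X_pow]
  have : ((p : k) + 1) = 1 := by rw [CharP.cast_eq_zero k p, zero_add]
  push_cast
  rw [this, map_one, one_mul]

lemma lemA (i : Fin (p + 1)) (a : ℕ) (h : MvPolynomial (Fin (p + 1)) k)
    (hh : pderiv i h = 0) :
    X i ^ (a + (p + 1)) * h + C ((a : k)) * (X i ^ a * h) ∈ relMod f := by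
  have key : X i ^ (a + (p + 1)) * h + C ((a : k)) * (X i ^ a * h)
      = Dop f i (X i ^ a * h) := by
    rw [Dop, pderiv_mul, hh, mul_zero, add_zero, X_mul_pderiv_f p k i,
      ← mul_assoc (X i), X_mul_pderiv_X_pow, pow_add]
    ring
  rw [key]
  exact Dop_mem_relMod _ _ _

lemma lemB (i : Fin (p + 1)) (m : ℕ) (h : MvPolynomial (Fin (p + 1)) k)
    (hh : pderiv i h = 0) :
    X i ^ (1 + m * (p + 1)) * h - C ((-1 : k) ^ m * (m ! : k)) * (X i * h)
      ∈ relMod f := by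
  induction m with
  | zero => simp
  | succ m ih =>
    have hA := lemA p hp k i (1 + m * (p + 1)) h hh
    have hcast : ((1 + m * (p + 1) : ℕ) : k) = 1 + (m : k) := by
      push_cast
      rw [CharP.cast_eq_zero k p]
      ring
    have hexp : 1 + (m + 1) * (p + 1) = 1 + m * (p + 1) + (p + 1) := by ring
    have key : X i ^ (1 + (m + 1) * (p + 1)) * h
        - C ((-1 : k) ^ (m + 1) * ((m + 1)! : k)) * (X i * h)
        = (X i ^ (1 + m * (p + 1) + (p + 1)) * h
            + C (((1 + m * (p + 1) : ℕ) : k)) * (X i ^ (1 + m * (p + 1)) * h))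
          - C (((1 + m * (p + 1) : ℕ) : k)) *
            (X i ^ (1 + m * (p + 1)) * h - C ((-1 : k) ^ m * (m ! : k)) * (X i * h)) := by
      rw [hexp, hcast]
      simp only [Nat.factorial_succ, Nat.cast_mul, Nat.cast_add, Nat.cast_one,
        map_mul, map_add, map_one, map_neg, map_pow, map_natCast]
      ring
    rw [key]
    refine sub_mem hA ?_
    rw [← smul_eq_C_mul]
    exact Submodule.smul_mem _ _ ih

lemma lemC (s : Finset (Fin (p + 1))) :
    (∏ i ∈ s, (X i : MvPolynomial (Fin (p + 1)) k) ^ (p ^ 2)) * ∏ i ∈ sᶜ, X i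
      - C (((-1 : k) ^ (p - 1) * ((p - 1)! : k)) ^ s.card) * ∏ i : Fin (p + 1), X i
      ∈ relMod f := by
  classical
  induction s using Finset.induction with
  | empty => simp [Finset.prod_pow_eq_pow_sum]
  | @insert j s hnot ih =>
    set c0 : k := (-1 : k) ^ (p - 1) * ((p - 1)! : k) with hc0
    set h : MvPolynomial (Fin (p + 1)) k
      := (∏ i ∈ s, X i ^ (p ^ 2)) * ∏ i ∈ (insert j s)ᶜ, X i with hdef
    have hjc : j ∉ (insert j s)ᶜ := by simp
    have hph : pderiv j h = 0 := by
      rw [hdef, pderiv_mul, pderiv_prod_pow j s hnot, zero_mul, zero_add]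
      have := pderiv_prod_pow (k := k) j ((insert j s)ᶜ) hjc (fun _ => 1)
      simp only [pow_one] at this
      rw [this, mul_zero]
    have hexp : 1 + (p - 1) * (p + 1) = p ^ 2 := by
      obtain ⟨q, rfl⟩ := Nat.exists_eq_succ_of_ne_zero hp.ne_zero
      simp only [Nat.succ_sub_one, Nat.succ_eq_add_one]
      ring
    have hB := lemB p hp k j (p - 1) h hph
    rw [hexp] at hB
    -- X j * h = ∏_{s} X^{p²} * ∏_{sᶜ} X
    have h1 : X j * h = (∏ i ∈ s, (X i : MvPolynomial (Fin (p + 1)) k) ^ (p ^ 2)) * ∏ i ∈ sᶜ, X i := by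
      have : (sᶜ : Finset (Fin (p + 1))) = insert j ((insert j s)ᶜ) := by
        rw [Finset.compl_insert]
        exact (Finset.insert_erase (Finset.mem_compl.2 hnot)).symm
      rw [this, Finset.prod_insert hjc, hdef]
      ring
    have h2 : X j ^ (p ^ 2) * h
        = (∏ i ∈ insert j s, (X i : MvPolynomial (Fin (p + 1)) k) ^ (p ^ 2))
          * ∏ i ∈ (insert j s)ᶜ, X i := by
      rw [Finset.prod_insert hnot, hdef]; ring
    rw [h1, h2] at hB
    have hcard : (insert j s).card = s.card + 1 := Finset.card_insert_of_notMem hnot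
    have key : (∏ i ∈ insert j s, (X i : MvPolynomial (Fin (p + 1)) k) ^ (p ^ 2))
          * ∏ i ∈ (insert j s)ᶜ, X i
        - C (c0 ^ (insert j s).card) * ∏ i : Fin (p + 1), X i
        = ((∏ i ∈ insert j s, (X i : MvPolynomial (Fin (p + 1)) k) ^ (p ^ 2))
            * ∏ i ∈ (insert j s)ᶜ, X i
          - C c0 * ((∏ i ∈ s, X i ^ (p ^ 2)) * ∏ i ∈ sᶜ, X i))
        + C c0 * ((∏ i ∈ s, X i ^ (p ^ 2)) * ∏ i ∈ sᶜ, X i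
            - C (c0 ^ s.card) * ∏ i : Fin (p + 1), X i) := by
      rw [hcard]
      simp only [pow_succ, map_mul]
      ring
    rw [key]
    refine add_mem hB ?_
    rw [← smul_eq_C_mul]
    exact Submodule.smul_mem _ _ ih

theorem stmt2' :
    ∃ c : k, c ≠ 0 ∧
      ((∏ i : Fin (p + 1), X i ^ (p ^ 2)) - C c * ∏ i : Fin (p + 1), X i)
        ∈ relMod (∑ i : Fin (p + 1), X i ^ (p + 1) : MvPolynomial (Fin (p + 1)) k) := by
  refine ⟨((-1 : k) ^ (p - 1) * ((p - 1)! : k)) ^ (p + 1), ?_, ?_⟩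
  · apply pow_ne_zero
    apply mul_ne_zero (pow_ne_zero _ (neg_ne_zero.2 one_ne_zero))
    rw [Ne, CharP.cast_eq_zero_iff k p, hp.dvd_factorial]
    have := hp.pos
    omega
  · have := lemC p hp k Finset.univ
    simpa using this

end Main

/-- Pole-order reduction proving Corollary 8.3: for the `(p−1)`-dimensional Fermat
variety `x_0^{p+1} + ⋯ + x_p^{p+1} = 0` in `P^p` one has
`(x_0⋯x_p)^{p²} ≡ c·(x_0⋯x_p) (mod 𝔇)` for some nonzero `c ∈ k`. -/
theorem stmt2 (p : ℕ) (hp : p.Prime) (k : Type*) [Field k] [CharP k p] :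
    ∃ c : k, c ≠ 0 ∧
      ((∏ i : Fin (p + 1), X i ^ (p ^ 2)) - C c * ∏ i : Fin (p + 1), X i)
        ∈ relMod (∑ i : Fin (p + 1), X i ^ (p + 1) : MvPolynomial (Fin (p + 1)) k) := by
  exact stmt2' p hp k
end

section
/- Let p be a prime with p ≠ 3 and let k be a field of characteristic p. In R = k[x_0, …, x_8] take f = x_0^3 + ⋯ + x_8^3 and let 𝔇 be the associated relations submodule. Then there exists c ∈ k with c ≠ 0 such that (x_0⋯x_8)^{2p} ≡ c · (x_0⋯x_8)^{2p mod 3} (mod 𝔇); here 2p mod 3 equals 2 if p ≡ 1 (mod 3) and 1 if p ≡ 2 (mod 3). (This is the pole-order reduction in the proof of Theorem 8.4: the target has pole order 6, respectively 3, which yields a′(X) = 2 for p ≡ 1 (mod 3) and a′(X) = 5 for p ≡ 2 (mod 3) for the 7-dimensional Fermat cubic X ⊂ P^8.) -/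
open MvPolynomial

section Aux

variable {k : Type*} [Field k]

lemma pderiv_fermat (i : Fin 9) :
    pderiv i (∑ j : Fin 9, X j ^ 3 : MvPolynomial (Fin 9) k) = 3 * X i ^ 2 := by
  rw [map_sum, Finset.sum_eq_single i]
  · simp [pderiv_pow]
  · intro j _ hj; simp [pderiv_pow, pderiv_X_of_ne hj]
  · simp

lemma X_mul_pderiv_pow (i : Fin 9) (m : ℕ) :
    X i * pderiv i (X i ^ m : MvPolynomial (Fin 9) k) = (m : MvPolynomial (Fin 9) k) * X i ^ m := by
  cases m with
  | zero => simp
  | succ m => rw [pderiv_pow, pderiv_X_self]; push_cast; simp; ring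

lemma pd_prod (a : Fin 9) (t : Finset (Fin 9)) (e : Fin 9 → ℕ) (ha : a ∉ t) :
    pderiv a (∏ i ∈ t, X i ^ e i : MvPolynomial (Fin 9) k) = 0 := by
  induction t using Finset.induction with
  | empty => simp [pderiv_one]
  | insert _ _ hb ih =>
    rw [Finset.prod_insert hb, pderiv_mul, pderiv_pow,
      pderiv_X_of_ne (by rintro rfl; exact ha (Finset.mem_insert_self _ _)),
      ih (fun h => ha (Finset.mem_insert_of_mem h))]
    ring

lemma step_mem (i : Fin 9) (m : ℕ) (h : MvPolynomial (Fin 9) k) (hh : pderiv i h = 0) :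
    ((3 : ℕ) : k) • (X i ^ (m + 3) * h) + ((m : ℕ) : k) • (X i ^ m * h)
      ∈ relMod (∑ j : Fin 9, X j ^ 3 : MvPolynomial (Fin 9) k) := by
  have key : ((3 : ℕ) : k) • (X i ^ (m + 3) * h) + ((m : ℕ) : k) • (X i ^ m * h)
      = Dop (∑ j : Fin 9, X j ^ 3) i (X i ^ m * h) := by
    rw [smul_eq_C_mul, smul_eq_C_mul, map_natCast C, map_natCast C]
    rw [Dop, pderiv_fermat, pderiv_mul, hh, mul_zero, add_zero]
    linear_combination - h * X_mul_pderiv_pow (k := k) i m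
  rw [key]
  exact Submodule.subset_span ⟨i, _, rfl⟩

lemma iter (i : Fin 9) (h : MvPolynomial (Fin 9) k) (hh : pderiv i h = 0)
    (h3 : ((3 : ℕ) : k) ≠ 0) (rr s : ℕ)
    (hnz : ∀ j, j < s → ((rr + 3 * j : ℕ) : k) ≠ 0) :
    ∃ c : k, c ≠ 0 ∧
      (relMod (∑ j : Fin 9, X j ^ 3 : MvPolynomial (Fin 9) k)).mkQ (X i ^ (rr + 3 * s) * h)
        = c • (relMod (∑ j : Fin 9, X j ^ 3 : MvPolynomial (Fin 9) k)).mkQ (X i ^ rr * h) := by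
  set D := relMod (∑ j : Fin 9, X j ^ 3 : MvPolynomial (Fin 9) k) with hD
  induction s with
  | zero => exact ⟨1, one_ne_zero, by simp⟩
  | succ s ih =>
    obtain ⟨c, hc, hQ⟩ := ih (fun j hj => hnz j (by omega))
    have hmem := step_mem i (rr + 3 * s) h hh
    have h0 : ((3 : ℕ) : k) • D.mkQ (X i ^ (rr + 3 * s + 3) * h)
        + ((rr + 3 * s : ℕ) : k) • D.mkQ (X i ^ (rr + 3 * s) * h) = 0 := by
      rw [← map_smul, ← map_smul, ← map_add, Submodule.mkQ_apply,
        Submodule.Quotient.mk_eq_zero]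
      exact hmem
    have hm : ((rr + 3 * s : ℕ) : k) ≠ 0 := hnz s (by omega)
    refine ⟨(((3 : ℕ) : k)⁻¹ * (-((rr + 3 * s : ℕ) : k))) * c,
      mul_ne_zero (mul_ne_zero (inv_ne_zero h3) (neg_ne_zero.mpr hm)) hc, ?_⟩
    have e1 : rr + 3 * (s + 1) = rr + 3 * s + 3 := by ring
    rw [e1]
    have h1 : ((3 : ℕ) : k) • D.mkQ (X i ^ (rr + 3 * s + 3) * h)
        = -(((rr + 3 * s : ℕ) : k) • D.mkQ (X i ^ (rr + 3 * s) * h)) :=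
      eq_neg_of_add_eq_zero_left h0
    calc D.mkQ (X i ^ (rr + 3 * s + 3) * h)
        = (((3 : ℕ) : k)⁻¹ * ((3 : ℕ) : k)) • D.mkQ (X i ^ (rr + 3 * s + 3) * h) := by
          rw [inv_mul_cancel₀ h3, one_smul]
      _ = ((3 : ℕ) : k)⁻¹ • (((3 : ℕ) : k) • D.mkQ (X i ^ (rr + 3 * s + 3) * h)) := by
          rw [mul_smul]
      _ = ((3 : ℕ) : k)⁻¹ • (-(((rr + 3 * s : ℕ) : k) • D.mkQ (X i ^ (rr + 3 * s) * h))) := by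
          rw [h1]
      _ = (((3 : ℕ) : k)⁻¹ * (-((rr + 3 * s : ℕ) : k))) • D.mkQ (X i ^ (rr + 3 * s) * h) := by
          rw [← neg_smul, smul_smul]
      _ = ((((3 : ℕ) : k)⁻¹ * (-((rr + 3 * s : ℕ) : k))) * c) • D.mkQ (X i ^ rr * h) := by
          rw [hQ, smul_smul]

lemma allvars (h3 : ((3 : ℕ) : k) ≠ 0) (rr s : ℕ)
    (hrs : ∀ j, j < s → ((rr + 3 * j : ℕ) : k) ≠ 0) (t : Finset (Fin 9)) :
    ∃ c : k, c ≠ 0 ∧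
      (relMod (∑ j : Fin 9, X j ^ 3 : MvPolynomial (Fin 9) k)).mkQ
          (∏ i : Fin 9, X i ^ (rr + 3 * s))
        = c • (relMod (∑ j : Fin 9, X j ^ 3 : MvPolynomial (Fin 9) k)).mkQ
          (∏ i : Fin 9, X i ^ (if i ∈ t then rr else rr + 3 * s)) := by
  set D := relMod (∑ j : Fin 9, X j ^ 3 : MvPolynomial (Fin 9) k) with hD
  induction t using Finset.induction with
  | empty => exact ⟨1, one_ne_zero, by simp⟩
  | @insert a t' ha ih =>
    obtain ⟨c, hc, hQ⟩ := ih
    have ha9 : a ∈ (Finset.univ : Finset (Fin 9)) := Finset.mem_univ a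
    set h : MvPolynomial (Fin 9) k := ∏ i ∈ Finset.univ.erase a, X i ^ (if i ∈ t' then rr else rr + 3 * s)
      with hhdef
    have hsplit1 : (∏ i : Fin 9, X i ^ (if i ∈ t' then rr else rr + 3 * s))
        = X a ^ (rr + 3 * s) * h := by
      rw [← Finset.mul_prod_erase _ _ ha9, if_neg ha]
    have hsplit2 : (∏ i : Fin 9, X i ^ (if i ∈ insert a t' then rr else rr + 3 * s))
        = X a ^ rr * h := by
      rw [← Finset.mul_prod_erase _ _ ha9, if_pos (Finset.mem_insert_self a t')]
      congr 1
      refine Finset.prod_congr rfl fun i hi => ?_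
      have hia : i ≠ a := (Finset.mem_erase.mp hi).1
      simp [Finset.mem_insert, hia]
    have hpd : pderiv a h = 0 := pd_prod a _ _ (Finset.notMem_erase a _)
    obtain ⟨d, hd, hQd⟩ := iter a h hpd h3 rr s hrs
    refine ⟨c * d, mul_ne_zero hc hd, ?_⟩
    calc D.mkQ (∏ i : Fin 9, X i ^ (rr + 3 * s))
        = c • D.mkQ (X a ^ (rr + 3 * s) * h) := by rw [hQ, hsplit1]
      _ = c • (d • D.mkQ (X a ^ rr * h)) := by rw [hQd]
      _ = (c * d) • D.mkQ (∏ i : Fin 9, X i ^ (if i ∈ insert a t' then rr else rr + 3 * s)) := by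
          rw [hsplit2, smul_smul]

end Aux

/-- Pole-order reduction in the proof of Theorem 8.4 for the 7-dimensional Fermat
cubic `x_0^3 + ⋯ + x_8^3 = 0` in `P^8`, `p ≠ 3`:
`(x_0⋯x_8)^{2p} ≡ c·(x_0⋯x_8)^{2p mod 3} (mod 𝔇)` with `c ≠ 0`; here `2p mod 3`
equals `2` if `p ≡ 1 (mod 3)` and `1` if `p ≡ 2 (mod 3)`. -/
theorem stmt3 (p : ℕ) (hp : p.Prime) (hp3 : p ≠ 3)
    (k : Type*) [Field k] [CharP k p] :
    (p % 3 = 1 → 2 * p % 3 = 2) ∧ (p % 3 = 2 → 2 * p % 3 = 1) ∧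
    ∃ c : k, c ≠ 0 ∧
      ((∏ i : Fin 9, X i ^ (2 * p)) - C c * ∏ i : Fin 9, X i ^ (2 * p % 3))
        ∈ relMod (∑ i : Fin 9, X i ^ 3 : MvPolynomial (Fin 9) k) := by
  refine ⟨by omega, by omega, ?_⟩
  have hp2 : 2 ≤ p := hp.two_le
  have hp3' : p % 3 ≠ 0 := by
    intro h
    exact hp3 ((Nat.prime_dvd_prime_iff_eq Nat.prime_three hp).mp
      (Nat.dvd_of_mod_eq_zero h)).symm
  have h3 : ((3 : ℕ) : k) ≠ 0 := by
    rw [Ne, CharP.cast_eq_zero_iff k p]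
    intro h
    exact hp3 ((Nat.prime_dvd_prime_iff_eq hp Nat.prime_three).mp h)
  set rr := 2 * p % 3 with hrr
  set s := (2 * p - rr) / 3 with hs
  have hsum : rr + 3 * s = 2 * p := by omega
  have hrs : ∀ j, j < s → ((rr + 3 * j : ℕ) : k) ≠ 0 := by
    intro j hj hz
    have hdvd : p ∣ rr + 3 * j := (CharP.cast_eq_zero_iff k p _).mp hz
    obtain ⟨q, hq⟩ := hdvd
    rcases Nat.lt_or_ge q 2 with h2 | h2
    · interval_cases q <;> omega
    · have : p * 2 ≤ p * q := Nat.mul_le_mul_left p h2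
      omega
  obtain ⟨c, hc, hQ⟩ := allvars (k := k) h3 rr s hrs Finset.univ
  rw [hsum] at hQ
  simp only [Finset.mem_univ, if_true] at hQ
  refine ⟨c, hc, ?_⟩
  set D := relMod (∑ j : Fin 9, X j ^ 3 : MvPolynomial (Fin 9) k) with hD
  have : D.mkQ ((∏ i : Fin 9, X i ^ (2 * p)) - C c * ∏ i : Fin 9, X i ^ rr) = 0 := by
    rw [map_sub, ← smul_eq_C_mul, map_smul, hQ, sub_self]
  rwa [Submodule.mkQ_apply, Submodule.Quotient.mk_eq_zero] at this
end

section
/- Let p be a prime with p ≠ 5, and let H ∈ 𝔽_p[X] be the Hasse–Witt polynomial H = Σ_{m=0}^{⌊(p−1)/5⌋} ((5m)!/(m!)^5 mod p) · X^{p−1−5m}. Then the multiplicity of 0 as a root of H is zero (equivalently, the constant coefficient of H is nonzero, i.e. the Fermat quintic threefold X_0 has a(X_0) = 0 and is ordinary) if and only if p ≡ 1 (mod 5). (The 'if' direction uses that for m = (p−1)/5 the coefficient (p−1)!/(((p−1)/5)!)^5 is a unit modulo p, e.g. by Wilson's theorem (p−1)! ≡ −1 (mod p).) -/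
/-- The Hasse–Witt polynomial of the Dwork quintic family in characteristic `p`:
`H = Σ_{m=0}^{⌊(p−1)/5⌋} ((5m)!/(m!)^5 mod p) · X^{p−1−5m}` in `𝔽_p[X]`. -/
noncomputable def hasseWittQuintic (p : ℕ) : Polynomial (ZMod p) :=
  ∑ m ∈ Finset.range ((p - 1) / 5 + 1),
    Polynomial.C (((5 * m).factorial / m.factorial ^ 5 : ℕ) : ZMod p) *
      Polynomial.X ^ (p - 1 - 5 * m)

lemma fact_pow_dvd' (k m : ℕ) : m.factorial ^ k ∣ (k * m).factorial := by
  induction k with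
  | zero => simp
  | succ n ih =>
    rw [pow_succ, Nat.succ_mul]
    exact dvd_trans (mul_dvd_mul ih dvd_rfl)
      (Nat.factorial_mul_factorial_dvd_factorial_add _ _)

lemma hW_coeff (p k : ℕ) : (hasseWittQuintic p).coeff k =
    ∑ m ∈ Finset.range ((p - 1) / 5 + 1),
      if k = p - 1 - 5 * m then (((5 * m).factorial / m.factorial ^ 5 : ℕ) : ZMod p) else 0 := by
  simp [hasseWittQuintic, Polynomial.finset_sum_coeff, Polynomial.coeff_C_mul,
    Polynomial.coeff_X_pow, mul_ite]

/-- For `p ≠ 5` prime, the Hasse–Witt polynomial `H` of the Dwork quintic family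
has `rootMultiplicity 0 H = 0` (i.e. the Fermat quintic threefold `X_0` has
`a(X_0) = 0` and is ordinary) if and only if `p ≡ 1 (mod 5)`. -/
theorem stmt5 (p : ℕ) (hp : p.Prime) (hp5 : p ≠ 5) :
    (hasseWittQuintic p).rootMultiplicity 0 = 0 ↔ p % 5 = 1 := by
  haveI := Fact.mk hp
  have hp1 : 1 < p := hp.one_lt
  -- leading coefficient is 1, so H ≠ 0
  have hlead : (hasseWittQuintic p).coeff (p - 1) = 1 := by
    rw [hW_coeff]
    rw [Finset.sum_eq_single_of_mem 0 (by simp)]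
    · simp
    · intro m hm hm0
      rw [Finset.mem_range] at hm
      have hm' : m ≤ (p - 1) / 5 := by omega
      have h5 : 5 * m ≤ p - 1 := by omega
      rw [if_neg]
      omega
  have hne : hasseWittQuintic p ≠ 0 := fun h => by
    rw [h] at hlead; simp at hlead
  rw [Polynomial.rootMultiplicity_eq_zero_iff]
  have hiff : ((hasseWittQuintic p).IsRoot 0 → hasseWittQuintic p = 0) ↔
      ¬ (hasseWittQuintic p).IsRoot 0 := ⟨fun h hr => absurd (h hr) hne, fun h hr => absurd hr h⟩
  rw [hiff, Polynomial.IsRoot, ← Polynomial.coeff_zero_eq_eval_zero, hW_coeff]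
  constructor
  · intro h
    by_contra hmod
    apply h
    apply Finset.sum_eq_zero
    intro m hm
    rw [Finset.mem_range] at hm
    rw [if_neg]
    omega
  · intro hmod h
    rw [Finset.sum_eq_single_of_mem ((p - 1) / 5)
      (by rw [Finset.mem_range]; omega)] at h
    · have he : 5 * ((p - 1) / 5) = p - 1 := by omega
      rw [if_pos (by omega), he] at h
      -- h : ((p-1)! / (m0!)^5 : ℕ) = 0 in ZMod p
      set m0 := (p - 1) / 5 with hm0
      have hdvd : m0.factorial ^ 5 ∣ (p - 1).factorial := by
        rw [← he]; exact fact_pow_dvd' 5 m0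
      have hden : ((m0.factorial ^ 5 : ℕ) : ZMod p) ≠ 0 := by
        rw [Ne, ZMod.natCast_eq_zero_iff]
        intro hd
        have h1 : p ∣ m0.factorial := hp.dvd_of_dvd_pow hd
        have h2 : p ≤ m0 := (Nat.Prime.dvd_factorial hp).mp h1
        omega
      rw [Nat.cast_div hdvd hden] at h
      rw [div_eq_zero_iff] at h
      rcases h with h | h
      · rw [ZMod.wilsons_lemma] at h
        exact (neg_ne_zero.mpr one_ne_zero) h
      · exact hden h
    · intro m hm hm'
      rw [Finset.mem_range] at hm
      rw [if_neg]
      omega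
end

section
/- Let k be a field, V a finite-dimensional k-vector space, and V₁, V₂ subspaces with V = V₁ ⊕ V₂ (internal direct sum) and dim V₁ = dim V₂ = g with g ≥ 1. For a natural number r with r ≤ g, let F^r ⊆ ⋀^g V be the k-span of all wedges v₁ ∧ ⋯ ∧ v_g of vectors v₁, …, v_g ∈ V such that v₁, …, v_r ∈ V₁. Let W ⊆ V be a subspace with dim W = g and set a = dim(W ∩ V₁). Then the image of ⋀^g W in ⋀^g V under the map induced by the inclusion W ↪ V is contained in F^a, and if a < g this image is not contained in F^{a+1}; that is, a = max{ r ≤ g : the image of ⋀^g W lies in F^r }. (This is the linear-algebra core of Proposition 6.1: applied to V = H¹_dR(X) of a g-dimensional abelian variety X, V₁ = H⁰(X,Ω¹), and W = F(H¹(X,O_X)), it shows that the two notions of a-number coincide, since F^• is the Hodge filtration on H^g_dR(X) = ⋀^g H¹_dR(X) and W ∩ V₁ = H⁰(X, B₁Ω¹_X).) -/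
set_option maxHeartbeats 1000000
set_option synthInstance.maxHeartbeats 400000

open ExteriorAlgebra

private lemma exists_dual_family (k : Type*) [Field k] (V : Type*) [AddCommGroup V] [Module k V]
    {m : ℕ} {c : Fin m → V} (hc : LinearIndependent k c) :
    ∃ φ : Fin m → (V →ₗ[k] k), ∀ i j, φ i (c j) = if i = j then 1 else 0 := by
  classical
  set L : (Fin m → k) →ₗ[k] V := (Pi.basisFun k (Fin m)).constr k c with hL
  have hker : LinearMap.ker L = ⊥ := by
    rw [LinearMap.ker_eq_bot']
    intro x hx
    have hx' : ∑ i, x i • c i = 0 := by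
      rw [← hx, hL, Module.Basis.constr_apply_fintype]
      simp [Pi.basisFun_equivFun]
    funext i
    exact Fintype.linearIndependent_iff.mp hc x hx' i
  obtain ⟨G, hG⟩ := L.exists_leftInverse_of_injective hker
  refine ⟨fun i => (LinearMap.proj i).comp G, fun i j => ?_⟩
  have h1 : L ((Pi.basisFun k (Fin m)) j) = c j := (Pi.basisFun k (Fin m)).constr_basis k c j
  have h2 : G (c j) = (Pi.basisFun k (Fin m)) j := by
    rw [← h1, ← LinearMap.comp_apply, hG, LinearMap.id_apply]
  simp [h2, Pi.basisFun_apply, Pi.single_apply]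

private lemma exists_perm_into {g a : ℕ} (S : Finset (Fin g)) (hS : a ≤ S.card) :
    ∃ σ : Equiv.Perm (Fin g), ∀ i : Fin g, (i : ℕ) < a → σ i ∈ S := by
  classical
  have hag : a ≤ g := hS.trans (by simpa using S.card_le_univ)
  obtain ⟨S', hsub, hcard⟩ := Finset.exists_subset_card_eq hS
  have E : {i : Fin g // (i : ℕ) < a} ≃ Fin a :=
    { toFun := fun x => ⟨x.1.1, x.2⟩
      invFun := fun j => ⟨⟨j.1, lt_of_lt_of_le j.2 hag⟩, j.2⟩
      left_inv := fun _ => rfl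
      right_inv := fun _ => rfl }
  have card1 : Fintype.card {i : Fin g // (i : ℕ) < a} = a :=
    (Fintype.card_congr E).trans (Fintype.card_fin a)
  have e₁ : {i : Fin g // (i : ℕ) < a} ≃ {x : Fin g // x ∈ S'} :=
    Fintype.equivOfCardEq (by rw [card1, Fintype.card_coe, hcard])
  have e₂ : {i : Fin g // ¬ (i : ℕ) < a} ≃ {x : Fin g // ¬ x ∈ S'} :=
    Fintype.equivOfCardEq (by
      rw [Fintype.card_subtype_compl, Fintype.card_subtype_compl, card1, Fintype.card_coe, hcard])
  refine ⟨((Equiv.sumCompl (fun i : Fin g => (i : ℕ) < a)).symm.trans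
      ((e₁.sumCongr e₂).trans (Equiv.sumCompl (fun x : Fin g => x ∈ S')))), fun i hi => ?_⟩
  simp only [Equiv.trans_apply]
  rw [Equiv.sumCompl_symm_apply_of_pos (p := fun i : Fin g => (i : ℕ) < a) hi]
  simp only [Equiv.sumCongr_apply, Sum.map_inl, Equiv.sumCompl_apply_inl]
  exact hsub (e₁ ⟨i, hi⟩).2

/-- Linear-algebra core of Proposition 6.1. `V = V₁ ⊕ V₂` with `dim V₁ = dim V₂ = g ≥ 1`,
`F^r ⊆ ⋀^g V` is the span of the pure wedges `v₁ ∧ ⋯ ∧ v_g` with `v₁, …, v_r ∈ V₁`,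
and `W ⊆ V` is a `g`-dimensional subspace with `a = dim (W ∩ V₁)`. Then the image of
`⋀^g W` in `⋀^g V` (under the map induced by the inclusion `W ↪ V`) is contained in
`F^a` but, if `a < g`, not in `F^{a+1}`. -/
theorem stmt6 (k : Type*) [Field k] (V : Type*) [AddCommGroup V] [Module k V]
    [FiniteDimensional k V] (g : ℕ) (hg : 1 ≤ g)
    (V₁ V₂ : Submodule k V) (hcompl : IsCompl V₁ V₂)
    (h1 : Module.finrank k V₁ = g) (h2 : Module.finrank k V₂ = g)
    (F : ℕ → Submodule k (ExteriorAlgebra k V))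
    (hF : ∀ r : ℕ, F r = Submodule.span k
      {x | ∃ v : Fin g → V, (∀ i : Fin g, (i : ℕ) < r → v i ∈ V₁) ∧ x = ιMulti k g v})
    (W : Submodule k V) (hW : Module.finrank k W = g)
    (a : ℕ) (ha : a = Module.finrank k (W ⊓ V₁ : Submodule k V)) :
    Submodule.map (ExteriorAlgebra.map W.subtype).toLinearMap (⋀[k]^g (↥W)) ≤ F a ∧
    (a < g →
      ¬ Submodule.map (ExteriorAlgebra.map W.subtype).toLinearMap (⋀[k]^g (↥W))
          ≤ F (a + 1)) := by
  classical
  have hag : a ≤ g := by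
    rw [ha, ← hW]
    exact Submodule.finrank_mono inf_le_left
  set W₁' : Submodule k ↥W := Submodule.comap W.subtype V₁ with hW₁'
  have hW₁'eq : W₁' = Submodule.comap W.subtype (W ⊓ V₁) := by
    ext x
    simp [hW₁', SetLike.coe_mem]
  have hfr1 : Module.finrank k ↥W₁' = a := by
    rw [ha, hW₁'eq]
    exact LinearEquiv.finrank_eq (Submodule.comapSubtypeEquivOfLe inf_le_left)
  obtain ⟨U, hcWU⟩ := Submodule.exists_isCompl W₁'
  have hfrU : Module.finrank k ↥U = g - a := by
    have h := Submodule.finrank_add_eq_of_isCompl hcWU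
    rw [hfr1, hW] at h
    omega
  set pr₁ : ↥W →ₗ[k] ↥W₁' := W₁'.linearProjOfIsCompl U hcWU with hpr₁
  set pr₂ : ↥W →ₗ[k] ↥U := U.linearProjOfIsCompl W₁' hcWU.symm with hpr₂
  have hproj : ∀ x : ↥W, ((pr₁ x : ↥W) : V) + ((pr₂ x : ↥W) : V) = (x : V) := by
    intro x
    have h := Submodule.projection_add_projection_eq_self hcWU x
    exact congrArg (fun y : ↥W => (y : V)) h
  -- Part 1 key
  have key1 : ∀ v : Fin g → ↥W, ιMulti k g (fun i => ((v i : ↥W) : V)) ∈ F a := by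
    intro v
    set X : Fin g → V := fun i => ((pr₁ (v i) : ↥W) : V) with hX
    set Y : Fin g → V := fun i => ((pr₂ (v i) : ↥W) : V) with hY
    have hXV₁ : ∀ i, X i ∈ V₁ := fun i => Submodule.mem_comap.mp (SetLike.coe_mem (pr₁ (v i)))
    have hYU : ∀ i, Y i ∈ Submodule.map W.subtype U := fun i =>
      Submodule.mem_map_of_mem (SetLike.coe_mem (pr₂ (v i)))
    have hsum : (fun i => ((v i : ↥W) : V)) = X + Y := by
      funext i
      simp [hX, hY, hproj (v i)]
    rw [hsum]
    have hexp := MultilinearMap.map_add_univ (ιMulti k g (M := V)).toMultilinearMap X Y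
    simp only [AlternatingMap.coe_multilinearMap] at hexp
    rw [hexp]
    apply Submodule.sum_mem
    intro S _
    by_cases hS : a ≤ S.card
    · obtain ⟨σ, hσ⟩ := exists_perm_into S hS
      have hgen : ιMulti k g (S.piecewise X Y ∘ σ) ∈ F a := by
        rw [hF]
        apply Submodule.subset_span
        refine ⟨S.piecewise X Y ∘ σ, fun i hi => ?_, rfl⟩
        have hmem := hσ i hi
        simp only [Function.comp_apply, Finset.piecewise_eq_of_mem _ _ _ hmem]
        exact hXV₁ _
      have hperm := (ιMulti k g (M := V)).map_perm (S.piecewise X Y) σ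
      rcases Int.units_eq_one_or (Equiv.Perm.sign σ) with hs | hs
      · rw [hs, one_smul] at hperm
        rw [← hperm]
        exact hgen
      · rw [hs] at hperm
        have h' : ιMulti k g (S.piecewise X Y) = -(ιMulti k g (S.piecewise X Y ∘ σ)) := by
          rw [hperm, Units.smul_def]
          simp
        rw [h']
        exact Submodule.neg_mem _ hgen
    · push_neg at hS
      have hdep : ¬ LinearIndependent k (S.piecewise X Y) := by
        intro hli
        have hli2 : LinearIndependent k
            ((S.piecewise X Y) ∘ (Subtype.val : {x // x ∈ Sᶜ} → Fin g)) :=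
          hli.comp _ Subtype.val_injective
        have hmem : ∀ j : {x // x ∈ Sᶜ}, (S.piecewise X Y) j.1 ∈ Submodule.map W.subtype U := by
          intro j
          have hj : j.1 ∉ S := Finset.mem_compl.mp j.2
          rw [Finset.piecewise_eq_of_notMem _ _ _ hj]
          exact hYU _
        have hli3 : LinearIndependent k
            (fun j : {x // x ∈ Sᶜ} => (⟨_, hmem j⟩ : ↥(Submodule.map W.subtype U))) := by
          apply LinearIndependent.of_comp (Submodule.map W.subtype U).subtype
          exact hli2
        have hcard := hli3.fintype_card_le_finrank
        have hfrU' : Module.finrank k ↥(Submodule.map W.subtype U) = g - a := by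
          rw [← hfrU]
          exact (LinearEquiv.finrank_eq
            (Submodule.equivMapOfInjective _ (Submodule.injective_subtype W) U)).symm
        rw [hfrU'] at hcard
        have hcc : Fintype.card {x // x ∈ Sᶜ} = g - S.card := by
          simp [Fintype.card_coe, Finset.card_compl]
        have hSg : S.card ≤ g := by simpa using S.card_le_univ
        omega
      rw [AlternatingMap.map_linearDependent _ _ hdep]
      exact Submodule.zero_mem _
  constructor
  · rw [← ιMulti_span_fixedDegree, Submodule.map_span, Submodule.span_le]
    rintro x ⟨y, ⟨v, rfl⟩, rfl⟩
    simpa [Function.comp_def] using key1 v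
  · intro hlt hle
    obtain b₁ := Module.finBasisOfFinrankEq k ↥W₁' hfr1
    obtain b₂ := Module.finBasisOfFinrankEq k ↥U hfrU
    set wfam : Fin g → ↥W := fun i =>
      if h : (i : ℕ) < a then ((b₁ ⟨i.1, h⟩ : ↥W₁') : ↥W)
      else ((b₂ ⟨i.1 - a, by have := i.isLt; omega⟩ : ↥U) : ↥W) with hwfam
    have hx₀mem : ιMulti k g (fun i => ((wfam i : ↥W) : V)) ∈
        Submodule.map (ExteriorAlgebra.map W.subtype).toLinearMap (⋀[k]^g ↥W) := by
      have hxin : ιMulti k g wfam ∈ ⋀[k]^g (↥W) := ιMulti_range k g (Set.mem_range_self wfam)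
      refine Submodule.mem_map.mpr ⟨ιMulti k g wfam, hxin, ?_⟩
      rw [AlgHom.toLinearMap_apply, map_apply_ιMulti]
      rfl
    set π : V →ₗ[k] ↥V₂ := V₂.linearProjOfIsCompl V₁ hcompl.symm with hπdef
    have hπV₁ : ∀ x ∈ V₁, π x = 0 := fun x hx =>
      Submodule.linearProjOfIsCompl_apply_right hcompl.symm ⟨x, hx⟩
    set c₁ : Fin a → V := fun j => ((b₁ j : ↥W) : V) with hc₁
    have hli₁ : LinearIndependent k c₁ := by
      have h := b₁.linearIndependent.map' (W.subtype.comp W₁'.subtype)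
        (LinearMap.ker_eq_bot.mpr
          ((Submodule.injective_subtype W).comp (Submodule.injective_subtype W₁')))
      exact h
    set d : Fin (g - a) → ↥V₂ := fun j => π ((b₂ j : ↥W) : V) with hd
    have hlid : LinearIndependent k d := by
      rw [Fintype.linearIndependent_iff]
      intro t ht
      have h0 : π (∑ j, t j • ((b₂ j : ↥W) : V)) = 0 := by
        rw [map_sum]
        simpa [map_smul] using ht
      have hkerV : (∑ j, t j • ((b₂ j : ↥W) : V)) ∈ V₁ := by
        have hk := Submodule.linearProjOfIsCompl_ker hcompl.symm
        rw [← hk]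
        exact LinearMap.mem_ker.mpr h0
      have hzW : (((∑ j, t j • ((b₂ j : ↥W) : ↥W)) : ↥W) : V)
          = ∑ j, t j • ((b₂ j : ↥W) : V) := by
        push_cast
        rfl
      have hz1 : (∑ j, t j • ((b₂ j : ↥W) : ↥W)) ∈ W₁' := by
        show W.subtype _ ∈ V₁
        rw [← hzW] at hkerV
        exact hkerV
      have hz2 : (∑ j, t j • ((b₂ j : ↥W) : ↥W)) ∈ U :=
        Submodule.sum_mem _ (fun j _ => Submodule.smul_mem _ _ (SetLike.coe_mem _))
      have hz0 : (∑ j, t j • ((b₂ j : ↥W) : ↥W)) = 0 := by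
        have hbot := hcWU.inf_eq_bot
        have hmem : (∑ j, t j • ((b₂ j : ↥W) : ↥W)) ∈ W₁' ⊓ U :=
          Submodule.mem_inf.mpr ⟨hz1, hz2⟩
        rw [hbot] at hmem
        simpa using hmem
      have hz0' : (∑ j, t j • b₂ j) = 0 := by
        apply Subtype.val_injective
        push_cast
        simpa using hz0
      exact fun j => Fintype.linearIndependent_iff.mp b₂.linearIndependent t hz0' j
    obtain ⟨φ, hφ⟩ := exists_dual_family k V hli₁
    obtain ⟨ψ, hψ⟩ := exists_dual_family k ↥V₂ hlid
    set L : V →ₗ[k] (Fin g → k) := LinearMap.pi (fun i : Fin g =>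
      if h : (i : ℕ) < a then φ ⟨i.1, h⟩
      else (ψ ⟨i.1 - a, by have := i.isLt; omega⟩).comp π) with hLdef
    set fAlt : V [⋀^Fin g]→ₗ[k] k := ((Pi.basisFun k (Fin g)).det).compLinearMap L with hfAlt
    set Φ : ExteriorAlgebra k V →ₗ[k] k :=
      liftAlternating (Function.update (fun n => (0 : V [⋀^Fin n]→ₗ[k] k)) g fAlt) with hΦdef
    have hΦι : ∀ v : Fin g → V, Φ (ιMulti k g v) = fAlt v := by
      intro v
      rw [hΦdef, liftAlternating_apply_ιMulti, Function.update_self]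
    have hfdet : ∀ v : Fin g → V, fAlt v = Matrix.det (Matrix.of fun i j => L (v j) i) := by
      intro v
      rw [hfAlt, AlternatingMap.compLinearMap_apply, Module.Basis.det_apply]
      congr 1
    have hak : a + 1 ≤ g := hlt
    have hFker : F (a + 1) ≤ LinearMap.ker Φ := by
      rw [hF, Submodule.span_le]
      rintro x ⟨v, hv, rfl⟩
      rw [SetLike.mem_coe, LinearMap.mem_ker, hΦι, hfdet]
      set Mv : Matrix (Fin g) (Fin g) k := Matrix.of fun i j => L (v j) i with hMv
      have hcol0 : ∀ (j : Fin (a + 1)) (i : Fin g), ¬ (i : ℕ) < a →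
          Mv i (Fin.castLE hak j) = 0 := by
        intro j i hi
        rw [hMv]
        simp only [Matrix.of_apply]
        rw [hLdef, LinearMap.pi_apply, dif_neg hi, LinearMap.comp_apply]
        rw [hπV₁ _ (hv _ (by simpa using j.isLt))]
        simp
      set C : Fin (a + 1) → (Fin a → k) := fun j i =>
        Mv (Fin.castLE hag i) (Fin.castLE hak j) with hC
      have hnli : ¬ LinearIndependent k C := by
        intro h
        have hc := h.fintype_card_le_finrank
        rw [Module.finrank_pi] at hc
        simp only [Fintype.card_fin] at hc
        omega
      obtain ⟨s, hs, j₀, hj₀⟩ := Fintype.not_linearIndependent_iff.mp hnli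
      set t : Fin g → k := fun i => if h : (i : ℕ) < a + 1 then s ⟨i.1, h⟩ else 0 with ht
      have ht0 : t ≠ 0 := by
        intro h0
        apply hj₀
        have h1 := congrFun h0 (Fin.castLE hak j₀)
        rw [ht] at h1
        simp only [Pi.zero_apply] at h1
        rw [dif_pos (show ((Fin.castLE hak j₀ : Fin g) : ℕ) < a + 1 from j₀.isLt)] at h1
        simpa using h1
      have hmv : Mv.mulVec t = 0 := by
        funext i
        have hzero : ∀ x ∈ (Finset.univ : Finset (Fin g)),
            x ∉ (Finset.univ : Finset (Fin (a + 1))).image (Fin.castLE hak) →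
            Mv i x * t x = 0 := by
          intro x _ hx
          have hxa : ¬ (x : ℕ) < a + 1 := by
            intro hcon
            exact hx (Finset.mem_image.mpr ⟨⟨x.1, hcon⟩, Finset.mem_univ _, by ext; simp⟩)
          rw [ht]
          simp only
          rw [dif_neg hxa, mul_zero]
        have hss : ∑ j : Fin g, Mv i j * t j
            = ∑ j : Fin (a + 1), Mv i (Fin.castLE hak j) * s j := by
          calc ∑ j : Fin g, Mv i j * t j
              = ∑ x ∈ (Finset.univ : Finset (Fin (a + 1))).image (Fin.castLE hak),
                  Mv i x * t x := (Finset.sum_subset (Finset.subset_univ _) hzero).symm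
            _ = ∑ j : Fin (a + 1), Mv i (Fin.castLE hak j) * t (Fin.castLE hak j) :=
                Finset.sum_image (fun x _ y _ hxy => Fin.castLE_injective hak hxy)
            _ = ∑ j : Fin (a + 1), Mv i (Fin.castLE hak j) * s j := by
                apply Finset.sum_congr rfl
                intro j _
                congr 1
                rw [ht]
                simp only
                rw [dif_pos (show ((Fin.castLE hak j : Fin g) : ℕ) < a + 1 from j.isLt)]
                exact congrArg s (Fin.ext rfl)
        show ∑ j : Fin g, Mv i j * t j = 0
        rw [hss]
        by_cases hi : (i : ℕ) < a
        · have happ := congrFun hs (⟨i.1, hi⟩ : Fin a)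
          simp only [Finset.sum_apply, Pi.smul_apply, smul_eq_mul, Pi.zero_apply] at happ
          rw [← happ]
          apply Finset.sum_congr rfl
          intro j _
          rw [hC]
          simp only
          rw [mul_comm]
          congr 1
        · apply Finset.sum_eq_zero
          intro j _
          rw [hcol0 j i hi, zero_mul]
      rw [← Matrix.exists_mulVec_eq_zero_iff]
      exact ⟨t, ht0, hmv⟩
    -- value on the adapted wedge
    have hworth : fAlt (fun i => ((wfam i : ↥W) : V)) = 1 := by
      rw [hfdet]
      set Mw : Matrix (Fin g) (Fin g) k :=
        Matrix.of fun i j => L ((wfam j : ↥W) : V) i with hMw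
      have hdiag : ∀ i : Fin g, Mw i i = 1 := by
        intro i
        rw [hMw]
        simp only [Matrix.of_apply]
        rw [hLdef, LinearMap.pi_apply]
        by_cases hi : (i : ℕ) < a
        · rw [dif_pos hi, hwfam]
          simp only [dif_pos hi]
          rw [show (((b₁ ⟨i.1, hi⟩ : ↥W₁') : ↥W) : V) = c₁ ⟨i.1, hi⟩ from rfl, hφ, if_pos rfl]
        · rw [dif_neg hi, hwfam, LinearMap.comp_apply]
          simp only [dif_neg hi]
          rw [show π (((b₂ ⟨i.1 - a, by have := i.isLt; omega⟩ : ↥U) : ↥W) : V)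
              = d ⟨i.1 - a, by have := i.isLt; omega⟩ from rfl, hψ, if_pos rfl]
      have htri : Mw.BlockTriangular id := by
        intro i j hij
        have hji : (j : ℕ) < (i : ℕ) := hij
        rw [hMw]
        simp only [Matrix.of_apply]
        rw [hLdef, LinearMap.pi_apply]
        by_cases hi : (i : ℕ) < a
        · have hj : (j : ℕ) < a := lt_trans hji hi
          rw [dif_pos hi, hwfam]
          simp only [dif_pos hj]
          rw [show (((b₁ ⟨j.1, hj⟩ : ↥W₁') : ↥W) : V) = c₁ ⟨j.1, hj⟩ from rfl, hφ,
            if_neg (by simp only [ne_eq, Fin.mk.injEq]; omega)]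
        · rw [dif_neg hi, LinearMap.comp_apply]
          by_cases hj : (j : ℕ) < a
          · have hmem : ((wfam j : ↥W) : V) ∈ V₁ := by
              rw [hwfam]
              simp only [dif_pos hj]
              exact Submodule.mem_comap.mp (SetLike.coe_mem (b₁ ⟨j.1, hj⟩))
            rw [hπV₁ _ hmem, map_zero]
          · rw [hwfam]
            simp only [dif_neg hj]
            rw [show π (((b₂ ⟨j.1 - a, by have := j.isLt; omega⟩ : ↥U) : ↥W) : V)
                = d ⟨j.1 - a, by have := j.isLt; omega⟩ from rfl, hψ,
              if_neg (by simp only [ne_eq, Fin.mk.injEq]; omega)]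
      rw [Matrix.det_of_upperTriangular htri]
      apply Finset.prod_eq_one
      intro i _
      exact hdiag i
    have hone : Φ (ιMulti k g (fun i => ((wfam i : ↥W) : V))) = 1 := by
      rw [hΦι, hworth]
    have hzero : Φ (ιMulti k g (fun i => ((wfam i : ↥W) : V))) = 0 :=
      LinearMap.mem_ker.mp (hFker (hle hx₀mem))
    rw [hzero] at hone
    exact zero_ne_one hone
end

section
/- Let p be a prime, k a field of characteristic p, and d ≥ 1 an integer with p ∤ d. In R = k[x_0, …, x_{N−1}] take f = x_0^d + ⋯ + x_{N−1}^d and let 𝔇 be the associated relations submodule. Let w, w' : Fin N → ℕ be exponent vectors such that for each i: w'_i ≤ w_i, w_i ≡ w'_i (mod d), and for every integer j with 1 ≤ j ≤ (w_i − w'_i)/d one has w_i − d·j ≢ 0 (mod p). Then x^w ≡ c · x^{w'} (mod 𝔇), where c = ∏_i ∏_{j=1}^{(w_i − w'_i)/d} (−(w_i − d·j)/d) ∈ k is nonzero. (This is the iterated pole-order reduction underlying the proofs of Theorems 8.1, 8.2 and 8.4.) -/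
open MvPolynomial

section aux
variable {k : Type*} [Field k] {N : ℕ}

lemma pderiv_sum_pow (d : ℕ) (i : Fin N) :
    pderiv i (∑ j : Fin N, (X j : MvPolynomial (Fin N) k) ^ d)
      = monomial (Finsupp.single i (d-1)) (d : k) := by
  have e : (Finsupp.single i d - Finsupp.single i 1 : Fin N →₀ ℕ) = Finsupp.single i (d-1) := by
    ext a
    simp only [Finsupp.tsub_apply, Finsupp.single_apply]
    split <;> simp
  rw [map_sum, Finset.sum_eq_single i]
  · rw [X_pow_eq_monomial, pderiv_monomial, e]
    simp
  · intro j _ hji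
    rw [X_pow_eq_monomial, pderiv_monomial]
    simp [Finsupp.single_apply, hji]
  · simp

lemma Dop_monomial (d : ℕ) (hd : 1 ≤ d) (i : Fin N) (s : Fin N →₀ ℕ) :
    Dop (∑ j : Fin N, X j ^ d) i (monomial s (1:k))
      = monomial s ((s i : k)) + monomial (s + Finsupp.single i d) (d : k) := by
  have e2 : (Finsupp.single i 1 + Finsupp.single i (d-1) + s : Fin N →₀ ℕ)
      = s + Finsupp.single i d := by
    rw [← Finsupp.single_add, add_comm]
    congr 2
    omega
  rw [Dop, pderiv_sum_pow d, pderiv_monomial, X, monomial_mul, monomial_mul, monomial_mul, e2]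
  congr 1
  · by_cases h : s i = 0
    · simp [h]
    · have hle : Finsupp.single i 1 ≤ s := by
        rw [Finsupp.single_le_iff]; omega
      rw [add_tsub_cancel_of_le hle]
      simp
  · simp

lemma step_mk (d : ℕ) (hd : 1 ≤ d) (hdk : (d:k) ≠ 0) (i : Fin N) (s : Fin N →₀ ℕ) :
    (Submodule.Quotient.mk (monomial (s + Finsupp.single i d) (1:k))
        : _ ⧸ relMod (∑ j : Fin N, X j ^ d))
      = (-((s i : k) / d)) • Submodule.Quotient.mk (monomial s 1) := by
  have h0 : (Submodule.Quotient.mk (Dop (∑ j : Fin N, X j ^ d) i (monomial s (1:k)))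
      : _ ⧸ relMod (∑ j : Fin N, X j ^ d)) = 0 := by
    rw [Submodule.Quotient.mk_eq_zero]
    exact Submodule.subset_span ⟨i, _, rfl⟩
  rw [Dop_monomial d hd] at h0
  have e1 : monomial s ((s i : k)) = (s i : k) • monomial s (1:k) := by
    rw [smul_monomial, smul_eq_mul, mul_one]
  have e2 : monomial (s + Finsupp.single i d) ((d : k))
      = (d : k) • monomial (s + Finsupp.single i d) (1:k) := by
    rw [smul_monomial, smul_eq_mul, mul_one]
  rw [e1, e2, Submodule.Quotient.mk_add, Submodule.Quotient.mk_smul,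
    Submodule.Quotient.mk_smul] at h0
  have h1 := congrArg (fun x => (d:k)⁻¹ • x) h0
  simp only [smul_add, smul_smul, smul_zero] at h1
  rw [inv_mul_cancel₀ hdk, one_smul] at h1
  have h2 := congrArg (fun x => x - ((d:k)⁻¹ * (s i : k)) •
      (Submodule.Quotient.mk (monomial s (1:k)) : _ ⧸ relMod (∑ j : Fin N, X j ^ d))) h1
  simp only [add_sub_cancel_left, zero_sub] at h2
  rw [h2, ← neg_smul]
  congr 1
  field_simp

lemma main_mk (d : ℕ) (hd : 1 ≤ d) (hdk : (d:k) ≠ 0) :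
    ∀ n (u u' : Fin N → ℕ), (∀ i, u' i ≤ u i) → (∀ i, d ∣ (u i - u' i)) →
    (∑ i, (u i - u' i)) = n →
    (Submodule.Quotient.mk (monomial (Finsupp.equivFunOnFinite.symm u) (1:k))
        : _ ⧸ relMod (∑ j : Fin N, X j ^ d))
      = (∏ i : Fin N, ∏ j ∈ Finset.Icc 1 ((u i - u' i) / d),
            (-(((u i - d * j : ℕ) : k) / (d : k)))) •
          Submodule.Quotient.mk (monomial (Finsupp.equivFunOnFinite.symm u') 1) := by
  intro n
  induction n using Nat.strong_induction_on with
  | _ n IH =>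
    intro u u' hle hdvd hsum
    by_cases hEq : ∀ i, u i = u' i
    · have : u = u' := funext hEq
      subst this
      have h0 : ∀ i : Fin N, (u i - u i) / d = 0 := by intro i; simp
      simp [h0]
    · push_neg at hEq
      obtain ⟨i, hi⟩ := hEq
      have hlt : u' i < u i := lt_of_le_of_ne (hle i) (Ne.symm hi)
      set m := (u i - u' i) / d with hm
      have hdm : u i - u' i = d * m := (Nat.mul_div_cancel' (hdvd i)).symm
      have hm1 : 1 ≤ m := by
        rcases Nat.eq_zero_or_pos m with h | h
        · rw [h, Nat.mul_zero] at hdm; omega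
        · exact h
      have hge : d ≤ d * m := Nat.le_mul_of_pos_right d hm1
      have hlink : d * (m - 1) + d = d * m := by
        rw [← Nat.mul_succ]
        congr 1
        omega
      set v := Function.update u' i (u' i + d) with hv
      have hvle : ∀ j, v j ≤ u j := by
        intro j
        rcases eq_or_ne j i with rfl | hj
        · simp only [hv, Function.update_self]; omega
        · simp only [hv, Function.update_of_ne hj]; exact hle j
      have hvdvd : ∀ j, d ∣ (u j - v j) := by
        intro j
        rcases eq_or_ne j i with rfl | hj
        · simp only [hv, Function.update_self]
          have : u j - (u' j + d) = d * (m - 1) := by omega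
          rw [this]; exact Dvd.intro _ rfl
        · simp only [hv, Function.update_of_ne hj]; exact hdvd j
      have hslt : (∑ j, (u j - v j)) < n := by
        rw [← hsum]
        apply Finset.sum_lt_sum
        · intro j _
          rcases eq_or_ne j i with rfl | hj
          · simp only [hv, Function.update_self]; omega
          · simp only [hv, Function.update_of_ne hj]; omega
        · exact ⟨i, Finset.mem_univ i, by simp only [hv, Function.update_self]; omega⟩
      have key := IH _ hslt u v hvle hvdvd rfl
      have hvexp : Finsupp.equivFunOnFinite.symm v
          = Finsupp.equivFunOnFinite.symm u' + Finsupp.single i d := by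
        ext a
        rcases eq_or_ne a i with rfl | ha
        · simp [hv]
        · simp [hv, Function.update_of_ne ha, Finsupp.single_apply, (Ne.symm ha : ¬ i = a)]
      have hstep : (Submodule.Quotient.mk (monomial (Finsupp.equivFunOnFinite.symm v) (1:k))
            : _ ⧸ relMod (∑ j : Fin N, X j ^ d))
          = (-((u' i : k) / d)) •
              Submodule.Quotient.mk (monomial (Finsupp.equivFunOnFinite.symm u') 1) := by
        rw [hvexp]
        have := step_mk d hd hdk i (Finsupp.equivFunOnFinite.symm u')
        simpa using this
      rw [key, hstep, smul_smul]
      congr 1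
      have hvi : ∀ j, j ≠ i → (u j - v j) = (u j - u' j) := by
        intro j hj; simp [hv, Function.update_of_ne hj]
      have hvii : (u i - v i) / d = m - 1 := by
        have h3 : u i - v i = d * (m - 1) := by
          simp only [hv, Function.update_self]; omega
        rw [h3, Nat.mul_div_cancel_left _ (by omega)]
      rw [Finset.prod_eq_prod_diff_singleton_mul (Finset.mem_univ i)
          (fun x => ∏ j ∈ Finset.Icc 1 ((u x - v x) / d), (-(((u x - d * j : ℕ) : k) / (d : k)))),
        Finset.prod_eq_prod_diff_singleton_mul (Finset.mem_univ i)
          (fun x => ∏ j ∈ Finset.Icc 1 ((u x - u' x) / d), (-(((u x - d * j : ℕ) : k) / (d : k))))]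
      rw [mul_assoc]
      congr 1
      · apply Finset.prod_congr rfl
        intro j hj
        have : j ≠ i := by simpa using (Finset.mem_sdiff.mp hj).2
        rw [hvi j this]
      · have hmm : (u i - u' i) / d = (m - 1) + 1 := by omega
        rw [hvii, hmm, Finset.prod_Icc_succ_top (by omega)]
        have h4 : u i - d * ((m - 1) + 1) = u' i := by
          have h5 := hle i
          have h6 : (m - 1) + 1 = m := by omega
          rw [h6]
          omega
        rw [h4]

end aux

/-- Iterated pole-order reduction for `f = x_0^d + ⋯ + x_{N−1}^d`, `p ∤ d`:
if `w' ≤ w` componentwise with `w_i ≡ w'_i (mod d)` and `w_i − d·j ≢ 0 (mod p)` for all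
`1 ≤ j ≤ (w_i − w'_i)/d`, then `x^w ≡ c·x^{w'} (mod 𝔇)` where
`c = ∏_i ∏_{j=1}^{(w_i−w'_i)/d} (−(w_i − d·j)/d) ∈ k` is nonzero. -/
theorem stmt9 (p : ℕ) (hp : p.Prime) (k : Type*) [Field k] [CharP k p]
    (d : ℕ) (hd : 1 ≤ d) (hpd : ¬ p ∣ d) (N : ℕ) (w w' : Fin N → ℕ)
    (hle : ∀ i, w' i ≤ w i)
    (hmod : ∀ i, w i % d = w' i % d)
    (hnz : ∀ i, ∀ j : ℕ, 1 ≤ j → j ≤ (w i - w' i) / d → ¬ p ∣ (w i - d * j)) :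
    (∏ i : Fin N, ∏ j ∈ Finset.Icc 1 ((w i - w' i) / d),
        (-(((w i - d * j : ℕ) : k) / (d : k)))) ≠ 0 ∧
    (∏ i : Fin N, X i ^ w i)
      - C (∏ i : Fin N, ∏ j ∈ Finset.Icc 1 ((w i - w' i) / d),
            (-(((w i - d * j : ℕ) : k) / (d : k))))
        * ∏ i : Fin N, X i ^ w' i
      ∈ relMod (∑ i : Fin N, X i ^ d) := by
  have hdk : (d : k) ≠ 0 := fun h => hpd ((CharP.cast_eq_zero_iff k p d).mp h)
  constructor
  · rw [Finset.prod_ne_zero_iff]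
    intro i _
    rw [Finset.prod_ne_zero_iff]
    intro j hj
    rw [Finset.mem_Icc] at hj
    have hh := hnz i j hj.1 hj.2
    have hcast : ((w i - d * j : ℕ) : k) ≠ 0 :=
      fun h => hh ((CharP.cast_eq_zero_iff k p _).mp h)
    exact neg_ne_zero.mpr (div_ne_zero hcast hdk)
  · have hdvd : ∀ i, d ∣ (w i - w' i) :=
      fun i => (Nat.modEq_iff_dvd' (hle i)).mp (hmod i).symm
    have hmon : ∀ (u : Fin N → ℕ), (∏ i : Fin N, (X i : MvPolynomial (Fin N) k) ^ u i)
        = monomial (Finsupp.equivFunOnFinite.symm u) 1 := by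
      intro u
      rw [monomial_eq, C_1, one_mul, Finsupp.prod_fintype]
      · simp
      · intro a; simp
    rw [← Submodule.Quotient.eq]
    rw [hmon w, hmon w']
    have hmain := main_mk d hd hdk (∑ i, (w i - w' i)) w w' hle hdvd rfl
    rw [hmain]
    rw [← Submodule.Quotient.mk_smul, smul_eq_C_mul]
end
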